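/- Let n_1, …, n_d be positive integers and n = n_1⋯n_d. The set D = { x_1 ⊗ x_2 ⊗ ⋯ ⊗ x_d : x_s ∈ ℝ^{n_s}, s ∈ [1,d] } of Kronecker-decomposable vectors is a closed subset of ℝⁿ; consequently, for every V ∈ ℝⁿ there exist x*_1 ∈ ℝ^{n_1}, …, x*_d ∈ ℝ^{n_d} minimizing ‖V − x_1 ⊗ ⋯ ⊗ x_d‖ over all tuples (x_1, …, x_d), i.e., the nearest Kronecker product problem has a solution. -/

import Mathlib

/-- The `s`-th mixed-radix digit (0-indexed) of an index `k ∈ Fin (n₁⋯n_d)`. -/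
def digitFin {d : ℕ} (n : Fin d → ℕ) (s : Fin d) (k : Fin (∏ t, n t)) : Fin (n s) :=
  ⟨(k.val / ∏ t ∈ Finset.Ioi s, n t) % n s,
   Nat.mod_lt _ (Nat.pos_of_ne_zero fun h0 => by
     have hk : (0 : ℕ) < ∏ t, n t := Nat.lt_of_le_of_lt (Nat.zero_le _) k.isLt
     rw [Finset.prod_eq_zero (Finset.mem_univ s) h0] at hk
     exact Nat.lt_irrefl 0 hk)⟩

/-- The iterated Kronecker product `x₁ ⊗ x₂ ⊗ ⋯ ⊗ x_d` of column vectors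
`x_s ∈ ℝ^{n_s}`, as a vector in `ℝ^{n₁⋯n_d}` (big-endian mixed-radix indexing). -/
noncomputable def bigKron {d : ℕ} (n : Fin d → ℕ)
    (x : ∀ s, EuclideanSpace ℝ (Fin (n s))) :
    EuclideanSpace ℝ (Fin (∏ t, n t)) :=
  WithLp.toLp 2 fun k => ∏ s, x s (digitFin n s k)

open Finset in
lemma digit_decomp : ∀ {d : ℕ} (n : Fin d → ℕ) (k : ℕ), k < ∏ t, n t →
    ∑ s, ((k / ∏ t ∈ Finset.Ioi s, n t) % n s) * ∏ t ∈ Finset.Ioi s, n t = k := by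
  intro d
  induction d with
  | zero =>
    intro n k hk
    have : k = 0 := by simpa using hk
    simp [this]
  | succ d ih =>
    intro n k hk
    set M := ∏ j : Fin d, n j.succ with hM
    have hsplit : ∏ t, n t = n 0 * M := Fin.prod_univ_succ n
    rw [hsplit] at hk
    have hpos : 0 < n 0 * M := Nat.lt_of_le_of_lt (Nat.zero_le _) hk
    have hMpos : 0 < M := Nat.pos_of_mul_pos_left (by rwa [Nat.mul_comm] at hpos)
    have hnpos : ∀ j : Fin d, 0 < n j.succ := by
      intro j
      rcases Nat.eq_zero_or_pos (n j.succ) with h | h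
      · have hz : M = 0 := Finset.prod_eq_zero (Finset.mem_univ j) h
        omega
      · exact h
    rw [Fin.sum_univ_succ]
    have h0 : ∏ t ∈ Ioi (0 : Fin (d + 1)), n t = M := Fin.prod_Ioi_zero n
    have hdiv : k / M < n 0 := Nat.div_lt_of_lt_mul (by rwa [Nat.mul_comm] at hk)
    have hterm0 : (k / ∏ t ∈ Ioi (0 : Fin (d+1)), n t) % n 0 * ∏ t ∈ Ioi (0 : Fin (d+1)), n t
        = (k / M) * M := by rw [h0, Nat.mod_eq_of_lt hdiv]
    have hrest : ∀ j : Fin d,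
        (k / ∏ t ∈ Ioi j.succ, n t) % n j.succ * ∏ t ∈ Ioi j.succ, n t
        = ((k % M) / ∏ t ∈ Ioi j, n t.succ) % n j.succ * ∏ t ∈ Ioi j, n t.succ := by
      intro j
      have hPs : ∏ t ∈ Ioi j.succ, n t = ∏ t ∈ Ioi j, n t.succ := Fin.prod_Ioi_succ n j
      set P := ∏ t ∈ Ioi j, n t.succ with hP
      have hPpos : 0 < P := Finset.prod_pos fun t _ => hnpos t
      set c := ∏ t ∈ (Ioi j)ᶜ, n t.succ with hc
      have hMc : P * c = M := Finset.prod_mul_prod_compl (Ioi j) _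
      have hjc : j ∈ (Ioi j)ᶜ := by simp
      have hdvd : n j.succ ∣ c := Finset.dvd_prod_of_mem _ hjc
      have h1 : k = k % M + (k / M * c) * P := by
        have h2 : k / M * c * P = k / M * M := by rw [mul_assoc, mul_comm c P, hMc]
        rw [h2, Nat.mod_add_div']
      have hdivP : k / P = k % M / P + k / M * c := by
        conv_lhs => rw [h1]
        exact Nat.add_mul_div_right _ _ hPpos
      have hmod : (k % M / P + k / M * c) % n j.succ = (k % M / P) % n j.succ := by
        obtain ⟨c', hc'⟩ := hdvd
        have h3 : k / M * c = k / M * c' * n j.succ := by rw [hc']; ring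
        rw [h3, Nat.add_mul_mod_self_right]
      rw [hPs, hdivP, hmod]
    rw [Finset.sum_congr rfl (fun j _ => hrest j), hterm0,
      ih (fun j => n j.succ) (k % M) (Nat.mod_lt k hMpos)]
    exact Nat.div_add_mod' k M

noncomputable def digitEquiv {d : ℕ} (n : Fin d → ℕ) :
    Fin (∏ t, n t) ≃ (∀ s, Fin (n s)) :=
  Equiv.ofBijective (fun k s => digitFin n s k)
    ((Fintype.bijective_iff_injective_and_card _).2
      ⟨fun a b h => by
        have ha := digit_decomp n a.val a.isLt
        have hb := digit_decomp n b.val b.isLt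
        apply Fin.ext
        rw [← ha, ← hb]
        refine Finset.sum_congr rfl fun s _ => ?_
        have := congrFun h s
        simp only [digitFin, Fin.mk.injEq] at this
        rw [this],
      by simp [Fintype.card_pi]⟩)

lemma digitEquiv_apply {d : ℕ} (n : Fin d → ℕ) (k : Fin (∏ t, n t)) (s : Fin d) :
    digitEquiv n k s = digitFin n s k := rfl

set_option maxHeartbeats 1000000 in
lemma norm_bigKron {d : ℕ} (n : Fin d → ℕ) (x : ∀ s, EuclideanSpace ℝ (Fin (n s))) :
    ‖bigKron n x‖ = ∏ s, ‖x s‖ := by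
  have key : ‖bigKron n x‖ ^ 2 = (∏ s, ‖x s‖) ^ 2 := by
    rw [EuclideanSpace.norm_eq, Real.sq_sqrt (by positivity), ← Finset.prod_pow]
    have hs : ∀ s, ‖x s‖ ^ 2 = ∑ i, ‖x s i‖ ^ 2 := fun s => by
      rw [EuclideanSpace.norm_eq, Real.sq_sqrt (by positivity)]
    calc ∑ k, ‖bigKron n x k‖ ^ 2
        = ∑ k, ∏ s, ‖x s (digitFin n s k)‖ ^ 2 := by
          refine Finset.sum_congr rfl fun k _ => ?_
          rw [show bigKron n x k = ∏ s, x s (digitFin n s k) from rfl,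
            Real.norm_eq_abs, Finset.abs_prod, Finset.prod_pow]
          simp [Real.norm_eq_abs]
      _ = ∑ g : ∀ s, Fin (n s), ∏ s, ‖x s (g s)‖ ^ 2 :=
          Fintype.sum_equiv (digitEquiv n) _ _ fun k => rfl
      _ = ∏ s, ∑ i, ‖x s i‖ ^ 2 := (Fintype.prod_sum fun s i => ‖x s i‖ ^ 2).symm
      _ = ∏ s, ‖x s‖ ^ 2 := by
          exact Finset.prod_congr rfl fun s _ => (hs s).symm
  have h1 := congrArg Real.sqrt key
  rwa [Real.sqrt_sq (norm_nonneg _),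
    Real.sqrt_sq (Finset.prod_nonneg fun s _ => norm_nonneg _)] at h1

lemma bigKron_smul {d : ℕ} (n : Fin d → ℕ) (c : Fin d → ℝ)
    (x : ∀ s, EuclideanSpace ℝ (Fin (n s))) :
    bigKron n (fun s => c s • x s) = (∏ s, c s) • bigKron n x := by
  ext k
  show (∏ s, (c s • x s) (digitFin n s k)) = ((∏ s, c s) • bigKron n x) k
  simp only [PiLp.smul_apply, smul_eq_mul, bigKron, Finset.prod_mul_distrib]

lemma bigKron_continuous {d : ℕ} (n : Fin d → ℕ) :
    Continuous (bigKron n : (∀ s, EuclideanSpace ℝ (Fin (n s))) → _) := by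
  have h : ∀ k, Continuous fun x : (∀ s, EuclideanSpace ℝ (Fin (n s))) =>
      ∏ s, x s (digitFin n s k) := by
    intro k
    apply continuous_finset_prod
    intro s _
    exact ((EuclideanSpace.proj (digitFin n s k)).continuous).comp (continuous_apply s)
  exact (PiLp.continuous_toLp 2 _).comp (continuous_pi h)

/-- The set of Kronecker-decomposable vectors is closed in `ℝⁿ`; consequently the
nearest Kronecker product problem always has a solution. -/
theorem NKP_exists {d : ℕ} (n : Fin d → ℕ) (hn : ∀ s, 0 < n s) :
    IsClosed {v : EuclideanSpace ℝ (Fin (∏ t, n t)) | ∃ x, v = bigKron n x} ∧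
    ∀ V : EuclideanSpace ℝ (Fin (∏ t, n t)),
      ∃ x : ∀ s, EuclideanSpace ℝ (Fin (n s)),
        ∀ y : ∀ s, EuclideanSpace ℝ (Fin (n s)),
          ‖V - bigKron n x‖ ≤ ‖V - bigKron n y‖ := by
  set S := {v : EuclideanSpace ℝ (Fin (∏ t, n t)) | ∃ x, v = bigKron n x} with hS
  have hclosed : IsClosed S := by
    rw [← closure_subset_iff_isClosed]
    intro v hv
    set R : ℝ := ‖v‖ + 1 with hR
    set C : ℝ := max R 1 with hC
    set B : Set (∀ s, EuclideanSpace ℝ (Fin (n s))) := Set.pi Set.univ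
      (fun s => Metric.closedBall 0 C) with hB
    have hBcomp : IsCompact B :=
      isCompact_univ_pi fun s => isCompact_closedBall 0 C
    set K : Set (EuclideanSpace ℝ (Fin (∏ t, n t))) := bigKron n '' B with hK
    have hKcomp : IsCompact K := hBcomp.image (bigKron_continuous n)
    -- rebalancing: S ∩ ball 0 R ⊆ K
    have hsub : S ∩ Metric.ball 0 R ⊆ K := by
      rintro w ⟨⟨x, rfl⟩, hball⟩
      rw [Metric.mem_ball, dist_zero_right] at hball
      by_cases hz : ∃ s, x s = 0
      · obtain ⟨s₀, hs₀⟩ := hz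
        refine ⟨fun _ => 0, fun s _ => by simp [hC], ?_⟩
        have h1 : bigKron n (fun _ => 0) = 0 := by
          ext k
          exact Finset.prod_eq_zero (Finset.mem_univ s₀) rfl
        have h2 : bigKron n x = 0 := by
          ext k
          refine Finset.prod_eq_zero (Finset.mem_univ s₀) ?_
          rw [hs₀]; rfl
        rw [h1, h2]
      · push_neg at hz
        set N : Fin d → ℝ := fun s => ‖x s‖ with hN
        have hNpos : ∀ s, 0 < N s := fun s => norm_pos_iff.2 (hz s)
        set P : ℝ := ∏ s, N s with hP
        have hPpos : 0 < P := Finset.prod_pos fun s _ => hNpos s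
        have hPnorm : ‖bigKron n x‖ = P := norm_bigKron n x
        have hPR : P < R := by rwa [hPnorm] at hball
        set t : ℝ := P ^ ((d : ℝ)⁻¹) with ht
        have htpos : 0 < t := Real.rpow_pos_of_pos hPpos _
        set y : ∀ s, EuclideanSpace ℝ (Fin (n s)) := fun s => (t / N s) • x s with hy
        have htd : t ^ d = P := by
          rw [ht, ← Real.rpow_natCast (P ^ ((d:ℝ)⁻¹)) d, ← Real.rpow_mul hPpos.le]
          rcases Nat.eq_zero_or_pos d with hd | hd
          · subst hd
            simp [hP]
          · rw [inv_mul_cancel₀ (by exact_mod_cast hd.ne' : (d:ℝ) ≠ 0), Real.rpow_one]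
        have hyeq : bigKron n y = bigKron n x := by
          rw [hy, bigKron_smul]
          have : (∏ s, t / N s) = 1 := by
            rw [Finset.prod_div_distrib, Finset.prod_const, Finset.card_univ,
              Fintype.card_fin, ← hP, htd, div_self hPpos.ne']
          rw [this, one_smul]
        have htC : t ≤ C := by
          by_cases hP1 : P ≤ 1
          · exact le_trans (Real.rpow_le_one hPpos.le hP1 (by positivity)) (le_max_right _ _)
          · push_neg at hP1
            have h1 : t ≤ P ^ (1 : ℝ) := by
              apply Real.rpow_le_rpow_of_exponent_le hP1.le
              rcases Nat.eq_zero_or_pos d with hd | hd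
              · subst hd; norm_num
              · rw [inv_le_one_iff₀]
                right
                exact_mod_cast hd
            rw [Real.rpow_one] at h1
            exact le_trans h1 (le_trans hPR.le (le_max_left _ _))
        refine ⟨y, fun s _ => ?_, hyeq⟩
        rw [Metric.mem_closedBall, dist_zero_right, hy]
        rw [norm_smul, Real.norm_eq_abs, abs_div, abs_of_pos htpos,
          abs_of_pos (hNpos s)]
        rw [div_mul_cancel₀ _ (hNpos s).ne']
        exact htC
    have hvmem : v ∈ closure (S ∩ Metric.ball 0 R) := by
      rw [mem_closure_iff]
      intro o ho hvo
      have hb : v ∈ Metric.ball (0 : EuclideanSpace ℝ (Fin (∏ t, n t))) R := by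
        rw [Metric.mem_ball, dist_zero_right, hR]
        linarith
      have h1 : v ∈ o ∩ Metric.ball 0 R := ⟨hvo, hb⟩
      rw [mem_closure_iff] at hv
      obtain ⟨w, hw1, hw2⟩ := hv _ (ho.inter Metric.isOpen_ball) h1
      exact ⟨w, hw1.1, hw2, hw1.2⟩
    have hvK : v ∈ K :=
      hKcomp.isClosed.closure_subset ((closure_mono (hsub.trans (le_refl K))).trans
        (by rw [hKcomp.isClosed.closure_eq]) hvmem)
    obtain ⟨x, _, hx⟩ := hvK
    exact ⟨x, hx.symm⟩
  refine ⟨hclosed, fun V => ?_⟩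
  have hne : S.Nonempty := ⟨bigKron n (fun _ => 0), fun _ => 0, rfl⟩
  obtain ⟨w, hwS, hwd⟩ := hclosed.exists_infDist_eq_dist hne V
  obtain ⟨x, rfl⟩ := hwS
  refine ⟨x, fun y => ?_⟩
  rw [← dist_eq_norm, ← dist_eq_norm, ← hwd]
  exact Metric.infDist_le_dist_of_mem ⟨y, rfl⟩
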